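/- Let $s_0, \ldots, s_{2n}$ be reals such that $H_n = [s_{i+j}]_{i,j=0}^n$ is positive definite. Then there exist reals $s_{2n+1}$ and $s_{2n+2}$ such that $H_{n+1} = [s_{i+j}]_{i,j=0}^{n+1}$ is positive definite. -/

import Mathlib

/-- Hankel matrix of a sequence. -/
def hankelMatrix (s : ℕ → ℝ) (n : ℕ) : Matrix (Fin (n + 1)) (Fin (n + 1)) ℝ :=
  Matrix.of fun i j => s ((i : ℕ) + (j : ℕ))

open Matrix in
private lemma posDef_submatrix_equiv {m l : Type*} [Fintype m] [Fintype l]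
    {M : Matrix m m ℝ} (hM : M.PosDef) (e : l ≃ m) : (M.submatrix e e).PosDef := by
  refine posDef_iff_dotProduct_mulVec.mpr ⟨hM.1.submatrix e, fun x hx => ?_⟩
  have key : star x ⬝ᵥ (M.submatrix e e) *ᵥ x
      = star (x ∘ e.symm) ⬝ᵥ M *ᵥ (x ∘ e.symm) := by
    rw [submatrix_mulVec_equiv]
    simp only [dotProduct, Function.comp]
    exact (Fintype.sum_equiv e.symm _ _ (fun i => by
      simp [mulVec, dotProduct, Function.comp])).symm
  rw [key]
  refine hM.dotProduct_mulVec_pos fun h => hx ?_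
  funext i
  have := congrFun h (e i)
  simpa using this

open Matrix in
private lemma posDef_fromBlocks {m l : Type*} [Fintype m] [Fintype l] [DecidableEq m]
    {A : Matrix m m ℝ} (B : Matrix m l ℝ) (D : Matrix l l ℝ) (hA : A.PosDef)
    (hS : (D - Bᴴ * A⁻¹ * B).PosDef) : (fromBlocks A B Bᴴ D).PosDef := by
  haveI : Invertible A := hA.isUnit.invertible
  refine posDef_iff_dotProduct_mulVec.mpr ⟨(IsHermitian.fromBlocks₁₁ B D hA.1).mpr hS.1, fun x hx => ?_⟩
  have hsplit := schur_complement_eq₁₁ (α := ℝ) B D (x ∘ Sum.inl) (x ∘ Sum.inr) hA.1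
  rw [Sum.elim_comp_inl_inr] at hsplit
  rw [dotProduct_mulVec, hsplit]
  by_cases hy : x ∘ Sum.inr = 0
  · have hx1 : x ∘ Sum.inl ≠ 0 := by
      intro h0
      apply hx
      funext i
      cases i with
      | inl i => exact congrFun h0 i
      | inr i => exact congrFun hy i
    have h2 : star (x ∘ Sum.inr) ᵥ* (D - Bᴴ * A⁻¹ * B) ⬝ᵥ (x ∘ Sum.inr) = 0 := by
      rw [hy]; simp
    rw [h2, add_zero, hy, mulVec_zero, add_zero, ← dotProduct_mulVec]
    exact hA.dotProduct_mulVec_pos hx1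
  · have h1 : 0 ≤ star (x ∘ Sum.inl + (A⁻¹ * B) *ᵥ (x ∘ Sum.inr)) ᵥ* A ⬝ᵥ
        (x ∘ Sum.inl + (A⁻¹ * B) *ᵥ (x ∘ Sum.inr)) := by
      rw [← dotProduct_mulVec]; exact hA.posSemidef.dotProduct_mulVec_nonneg _
    have h2 : 0 < star (x ∘ Sum.inr) ᵥ* (D - Bᴴ * A⁻¹ * B) ⬝ᵥ (x ∘ Sum.inr) := by
      rw [← dotProduct_mulVec]; exact hS.dotProduct_mulVec_pos hy
    linarith

private lemma posDef_one_dim {M : Matrix (Fin 1) (Fin 1) ℝ} (h : 0 < M 0 0) : M.PosDef := by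
  refine Matrix.posDef_iff_dotProduct_mulVec.mpr ⟨by ext i j; fin_cases i; fin_cases j; rfl, fun x hx => ?_⟩
  have hx0 : x 0 ≠ 0 := by
    intro h0; apply hx; funext i; fin_cases i; exact h0
  simp only [dotProduct, Matrix.mulVec, dotProduct, Fin.sum_univ_one, star_trivial]
  have h2 : x 0 * (M 0 0 * x 0) = M 0 0 * (x 0 * x 0) := by ring
  rw [h2]
  exact mul_pos h (mul_self_pos.mpr hx0)

open Matrix in
theorem stmt_7 (n : ℕ) (s : ℕ → ℝ) (hpd : (hankelMatrix s n).PosDef) :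
    ∃ a b : ℝ, (Matrix.of fun i j : Fin (n + 2) =>
      if (i : ℕ) + (j : ℕ) = 2 * n + 1 then a
      else if (i : ℕ) + (j : ℕ) = 2 * n + 2 then b
      else s ((i : ℕ) + (j : ℕ))).PosDef := by
  classical
  haveI : Invertible (hankelMatrix s n) := hpd.isUnit.invertible
  -- the column vector
  set A := hankelMatrix s n with hA
  set B : Matrix (Fin (n + 1)) (Fin 1) ℝ :=
    Matrix.of (fun i _ => if (i : ℕ) + (n + 1) = 2 * n + 1 then 0 else s ((i : ℕ) + (n + 1)))
    with hB
  set c : ℝ := (Bᴴ * A⁻¹ * B) 0 0 with hc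
  set b : ℝ := c + 1 with hb
  refine ⟨0, b, ?_⟩
  set D : Matrix (Fin 1) (Fin 1) ℝ := Matrix.of (fun _ _ => b) with hD
  have hSchur : (D - Bᴴ * A⁻¹ * B).PosDef := by
    apply posDef_one_dim
    have h00 : (D - Bᴴ * A⁻¹ * B) 0 0 = b - c := rfl
    rw [h00, hb]
    linarith
  have hblocks := posDef_fromBlocks B D hpd hSchur
  have hsub := posDef_submatrix_equiv hblocks (finSumFinEquiv (m := n + 1) (n := 1)).symm
  have hv : ∀ k : Fin (n + 1), ((finSumFinEquiv (m := n + 1) (n := 1) (Sum.inl k)) : ℕ) = k :=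
    fun k => by simp
  have hw : ∀ k : Fin 1, ((finSumFinEquiv (m := n + 1) (n := 1) (Sum.inr k)) : ℕ) = n + 1 :=
    fun k => by simp
  have heq : (Matrix.fromBlocks A B Bᴴ D).submatrix finSumFinEquiv.symm finSumFinEquiv.symm
      = (Matrix.of fun i j : Fin (n + 2) =>
        if (i : ℕ) + (j : ℕ) = 2 * n + 1 then (0:ℝ)
        else if (i : ℕ) + (j : ℕ) = 2 * n + 2 then b
        else s ((i : ℕ) + (j : ℕ))) := by
    funext i j
    simp only [Matrix.submatrix_apply]
    rcases hi' : finSumFinEquiv.symm i with i' | i' <;>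
      rcases hj' : finSumFinEquiv.symm j with j' | j' <;>
      have hi := congrArg finSumFinEquiv hi' <;>
      have hj := congrArg finSumFinEquiv hj' <;>
      rw [Equiv.apply_symm_apply] at hi hj <;>
      subst hi hj <;>
      rw [Matrix.of_apply]
    · -- inl, inl
      rw [hv i', hv j']
      have hlti := i'.isLt; have hltj := j'.isLt
      rw [if_neg (by omega), if_neg (by omega)]
      rfl
    · -- inl, inr
      rw [hv i', hw j']
      have hlti := i'.isLt
      show (if (i' : ℕ) + (n + 1) = 2 * n + 1 then (0:ℝ) else s ((i' : ℕ) + (n + 1))) = _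
      by_cases hcase : (i' : ℕ) + (n + 1) = 2 * n + 1
      · rw [if_pos hcase, if_pos hcase]
      · rw [if_neg hcase, if_neg hcase, if_neg (by omega)]
    · -- inr, inl
      rw [hw i', hv j']
      have hltj := j'.isLt
      show star (if (j' : ℕ) + (n + 1) = 2 * n + 1 then (0:ℝ) else s ((j' : ℕ) + (n + 1))) = _
      rw [star_trivial]
      by_cases hcase : (j' : ℕ) + (n + 1) = 2 * n + 1
      · rw [if_pos hcase, if_pos (by omega)]
      · rw [if_neg hcase, if_neg (by omega), if_neg (by omega), Nat.add_comm]
    · -- inr, inr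
      rw [hw i', hw j']
      show b = _
      rw [if_neg (by omega), if_pos (by omega)]
  rw [heq] at hsub
  exact hsub
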